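/- arXiv:1501.04119 — 3 statements merged into one kernel-verified Lean document; each statement's English description precedes it below -/
import Mathlib

section
/- In a near polygon, any three pairwise collinear points lie on a common line; equivalently, the collinearity graph of a near polygon contains no triangle whose three vertices are not all incident with one line. -/
structure Geometry (P : Type*) where
  lines : Set (Set P)

namespace Geometry

variable {P : Type*}

/-- A partial linear space: two distinct points lie on at most one common line. -/
def IsPLS (S : Geometry P) : Prop :=
  ∀ L₁ ∈ S.lines, ∀ L₂ ∈ S.lines, ∀ x y : P,
    x ≠ y → x ∈ L₁ → y ∈ L₁ → x ∈ L₂ → y ∈ L₂ → L₁ = L₂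

/-- The collinearity graph. -/
def coll (S : Geometry P) : SimpleGraph P where
  Adj x y := x ≠ y ∧ ∃ L ∈ S.lines, x ∈ L ∧ y ∈ L
  symm := ⟨by rintro x y ⟨h, L, hL, hx, hy⟩; exact ⟨h.symm, L, hL, hy, hx⟩⟩
  loopless := ⟨by rintro x ⟨h, -⟩; exact h rfl⟩

/-- A near polygon: connected partial linear space with the unique nearest point property. -/
def IsNearPolygon (S : Geometry P) : Prop :=
  S.IsPLS ∧ S.coll.Connected ∧
    ∀ (x : P), ∀ L ∈ S.lines,
      ∃! p, p ∈ L ∧ ∀ q ∈ L, S.coll.dist x p ≤ S.coll.dist x q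

end Geometry

theorem stmt1 {P : Type*} (S : Geometry P) (hS : S.IsNearPolygon)
    (x y z : P) (hxy : S.coll.Adj x y) (hyz : S.coll.Adj y z) (hxz : S.coll.Adj x z) :
    ∃ L ∈ S.lines, x ∈ L ∧ y ∈ L ∧ z ∈ L := by
  obtain ⟨hPLS, hconn, hnp⟩ := hS
  obtain ⟨hyz_ne, L, hL, hyL, hzL⟩ := hyz
  by_cases hxL : x ∈ L
  · exact ⟨L, hL, hxL, hyL, hzL⟩
  · exfalso
    obtain ⟨p, _, huniq⟩ := hnp x L hL
    have hmin : ∀ w : P, w ∈ L → S.coll.Adj x w →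
        (w ∈ L ∧ ∀ q ∈ L, S.coll.dist x w ≤ S.coll.dist x q) := by
      intro w hw hadj
      refine ⟨hw, fun q hq => ?_⟩
      have h1 : S.coll.dist x w = 1 := SimpleGraph.dist_eq_one_iff_adj.mpr hadj
      have hq1 : 0 < S.coll.dist x q :=
        hconn.pos_dist_of_ne (fun h => hxL (h ▸ hq))
      omega
    have h1 := huniq y (hmin y hyL hxy)
    have h2 := huniq z (hmin z hzL hxz)
    exact hyz_ne (h1.trans h2.symm)
end

section
/- The symplectic generalized quadrangle W(2) admits no partition of its point set into ovoids. Equivalently, there do not exist three pairwise disjoint ovoids in W(2). -/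
/-- The underlying vector space F₂⁴. -/
abbrev W2V := Fin 4 → ZMod 2

/-- A nondegenerate alternating bilinear form on F₂⁴. -/
def W2B (x y : W2V) : ZMod 2 := x 0 * y 1 + x 1 * y 0 + x 2 * y 3 + x 3 * y 2

/-- The points of W(2): the 15 nonzero vectors. -/
abbrev W2Pt := {v : W2V // v ≠ 0}

/-- The lines of W(2): the triples {x, y, x+y} with B(x,y) = 0, x ≠ y. -/
def W2IsLine (L : Set W2Pt) : Prop :=
  ∃ x y : W2Pt, x.1 ≠ y.1 ∧ W2B x.1 y.1 = 0 ∧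
    L = {p : W2Pt | p.1 = x.1 ∨ p.1 = y.1 ∨ p.1 = x.1 + y.1}

/-- An ovoid of W(2): pairwise non-collinear points meeting every line. -/
def W2IsOvoid (O : Set W2Pt) : Prop :=
  (∀ x ∈ O, ∀ y ∈ O, x ≠ y → W2B x.1 y.1 ≠ 0) ∧
  ∀ L : Set W2Pt, W2IsLine L → (O ∩ L).Nonempty

/- ### Auxiliary decidable facts about W2V -/

lemma w2_add_ne_zero : ∀ x y : W2V, x ≠ y → x + y ≠ 0 := by decide

lemma w2_ne_add_left : ∀ x y : W2V, y ≠ 0 → x ≠ x + y := by decide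

lemma w2_ne_add_right : ∀ x y : W2V, x ≠ 0 → y ≠ x + y := by decide

lemma w2_self : ∀ x : W2V, W2B x x = 0 := by decide

lemma w2_col5 : ∀ x y : W2V, W2B x y = 0 →
    W2B x (x + y) = 0 ∧ W2B y x = 0 ∧ W2B y (x + y) = 0 ∧
    W2B (x + y) x = 0 ∧ W2B (x + y) y = 0 := by decide

lemma w2_col_mem : ∀ x y u v : W2V, W2B x y = 0 →
    (u = x ∨ u = y ∨ u = x + y) → (v = x ∨ v = y ∨ v = x + y) → W2B u v = 0 := by
  intro x y u v hB hu hv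
  obtain ⟨c1, c2, c3, c4, c5⟩ := w2_col5 x y hB
  rcases hu with rfl | rfl | rfl <;> rcases hv with rfl | rfl | rfl
  exacts [w2_self _, hB, c1, c2, w2_self _, c3, c4, c5, w2_self _]

/- ### The 9-point non-3-colorable certificate -/

def w2pts : Fin 9 → W2Pt :=
  ![⟨![0,0,0,1], by decide⟩, ⟨![0,0,1,0], by decide⟩, ⟨![0,0,1,1], by decide⟩,
    ⟨![0,1,0,0], by decide⟩, ⟨![0,1,0,1], by decide⟩, ⟨![1,0,0,0], by decide⟩,
    ⟨![1,0,1,0], by decide⟩, ⟨![1,1,0,0], by decide⟩, ⟨![1,1,1,1], by decide⟩]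

def w2edges : List (Fin 9 × Fin 9) :=
  [(0,3),(0,4),(0,5),(0,7),(1,3),(1,5),(1,6),(1,7),(2,3),(2,5),(2,7),(2,8),
   (3,4),(4,6),(4,8),(5,6),(6,8),(7,8)]

lemma w2edges_prop : ∀ e ∈ w2edges,
    (w2pts e.1).1 ≠ (w2pts e.2).1 ∧ W2B (w2pts e.1).1 (w2pts e.2).1 = 0 := by
  set_option maxRecDepth 10000 in decide

lemma w2cert_bool : ∀ x0 x1 x2 x3 x4 x5 x6 x7 x8 : Fin 3,
    ((x0 == x3) || (x0 == x4) || (x0 == x5) || (x0 == x7) || (x1 == x3) || (x1 == x5) || (x1 == x6) || (x1 == x7) || (x2 == x3) || (x2 == x5) || (x2 == x7) || (x2 == x8) || (x3 == x4) || (x4 == x6) || (x4 == x8) || (x5 == x6) || (x6 == x8) || (x7 == x8)) = true := by decide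

lemma w2cert : ∀ x0 x1 x2 x3 x4 x5 x6 x7 x8 : Fin 3,
    x0 = x3 ∨ x0 = x4 ∨ x0 = x5 ∨ x0 = x7 ∨ x1 = x3 ∨ x1 = x5 ∨ x1 = x6 ∨ x1 = x7 ∨ x2 = x3 ∨ x2 = x5 ∨ x2 = x7 ∨ x2 = x8 ∨ x3 = x4 ∨ x4 = x6 ∨ x4 = x8 ∨ x5 = x6 ∨ x6 = x8 ∨ x7 = x8 := by
  intro x0 x1 x2 x3 x4 x5 x6 x7 x8
  have h := w2cert_bool x0 x1 x2 x3 x4 x5 x6 x7 x8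
  simpa only [Bool.or_eq_true, beq_iff_eq, or_assoc] using h

/- ### No partition into three ovoids -/

theorem w2_no_partition : ¬ ∃ O₁ O₂ O₃ : Set W2Pt, W2IsOvoid O₁ ∧ W2IsOvoid O₂ ∧ W2IsOvoid O₃ ∧
    Disjoint O₁ O₂ ∧ Disjoint O₁ O₃ ∧ Disjoint O₂ O₃ ∧
    O₁ ∪ O₂ ∪ O₃ = Set.univ := by
  rintro ⟨O₁, O₂, O₃, h₁, h₂, h₃, -, -, -, hcov⟩
  classical
  set c : W2Pt → Fin 3 := fun p => if p ∈ O₁ then 0 else if p ∈ O₂ then 1 else 2 with hc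
  have key : ∀ p q : W2Pt, p.1 ≠ q.1 → W2B p.1 q.1 = 0 → c p ≠ c q := by
    intro p q hne hB hcpq
    have hpq : p ≠ q := fun h => hne (congrArg Subtype.val h)
    have hmem3 : ∀ r : W2Pt, r ∉ O₁ → r ∉ O₂ → r ∈ O₃ := by
      intro r hr1 hr2
      have : r ∈ O₁ ∪ O₂ ∪ O₃ := by rw [hcov]; trivial
      rcases this with (h | h) | h
      · exact absurd h hr1
      · exact absurd h hr2
      · exact h
    by_cases hp1 : p ∈ O₁ <;> by_cases hq1 : q ∈ O₁ <;>
      by_cases hp2 : p ∈ O₂ <;> by_cases hq2 : q ∈ O₂ <;>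
      simp only [hc, hp1, hq1, hp2, hq2, if_true, if_false] at hcpq
    all_goals first
      | exact h₁.1 p hp1 q hq1 hpq hB
      | exact h₂.1 p hp2 q hq2 hpq hB
      | exact h₃.1 p (hmem3 p hp1 hp2) q (hmem3 q hq1 hq2) hpq hB
      | simp at hcpq
  have hkey : ∀ e ∈ w2edges, c (w2pts e.1) ≠ c (w2pts e.2) := by
    intro e he
    obtain ⟨hne, hB⟩ := w2edges_prop e he
    exact key _ _ hne hB
  rcases w2cert (c (w2pts 0)) (c (w2pts 1)) (c (w2pts 2)) (c (w2pts 3)) (c (w2pts 4))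
      (c (w2pts 5)) (c (w2pts 6)) (c (w2pts 7)) (c (w2pts 8)) with
    h|h|h|h|h|h|h|h|h|h|h|h|h|h|h|h|h|h
  all_goals first
    | exact hkey (0,3) (by decide) h
    | exact hkey (0,4) (by decide) h
    | exact hkey (0,5) (by decide) h
    | exact hkey (0,7) (by decide) h
    | exact hkey (1,3) (by decide) h
    | exact hkey (1,5) (by decide) h
    | exact hkey (1,6) (by decide) h
    | exact hkey (1,7) (by decide) h
    | exact hkey (2,3) (by decide) h
    | exact hkey (2,5) (by decide) h
    | exact hkey (2,7) (by decide) h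
    | exact hkey (2,8) (by decide) h
    | exact hkey (3,4) (by decide) h
    | exact hkey (4,6) (by decide) h
    | exact hkey (4,8) (by decide) h
    | exact hkey (5,6) (by decide) h
    | exact hkey (6,8) (by decide) h
    | exact hkey (7,8) (by decide) h

/- ### Complement of two disjoint ovoids is an ovoid -/

theorem w2_compl_ovoid {O₁ O₂ : Set W2Pt} (h₁ : W2IsOvoid O₁) (h₂ : W2IsOvoid O₂)
    (d : Disjoint O₁ O₂) : W2IsOvoid (O₁ ∪ O₂)ᶜ := by
  constructor
  · intro x hx y hy hxy hB
    have hxyv : x.1 ≠ y.1 := fun h => hxy (Subtype.ext h)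
    have hz0 : x.1 + y.1 ≠ 0 := w2_add_ne_zero _ _ hxyv
    set z : W2Pt := ⟨x.1 + y.1, hz0⟩ with hzdef
    have hL : W2IsLine {p : W2Pt | p.1 = x.1 ∨ p.1 = y.1 ∨ p.1 = x.1 + y.1} :=
      ⟨x, y, hxyv, hB, rfl⟩
    have hx1 : x ∉ O₁ := fun h => hx (Or.inl h)
    have hx2 : x ∉ O₂ := fun h => hx (Or.inr h)
    have hy1 : y ∉ O₁ := fun h => hy (Or.inl h)
    have hy2 : y ∉ O₂ := fun h => hy (Or.inr h)
    obtain ⟨a, haO, haL⟩ := h₁.2 _ hL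
    obtain ⟨b, hbO, hbL⟩ := h₂.2 _ hL
    have haz : z ∈ O₁ := by
      rcases haL with h | h | h
      · rw [Subtype.ext h] at haO; exact absurd haO hx1
      · rw [Subtype.ext h] at haO; exact absurd haO hy1
      · have : a = z := Subtype.ext h
        rwa [this] at haO
    have hbz : z ∈ O₂ := by
      rcases hbL with h | h | h
      · rw [Subtype.ext h] at hbO; exact absurd hbO hx2
      · rw [Subtype.ext h] at hbO; exact absurd hbO hy2
      · have : b = z := Subtype.ext h
        rwa [this] at hbO
    exact Set.disjoint_left.mp d haz hbz
  · intro L hL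
    obtain ⟨x, y, hxy, hB, rfl⟩ := hL
    by_contra hemp
    have hmem : ∀ p : W2Pt, p.1 = x.1 ∨ p.1 = y.1 ∨ p.1 = x.1 + y.1 → p ∈ O₁ ∪ O₂ := by
      intro p hp
      by_contra h
      exact hemp ⟨p, h, hp⟩
    have hxz := w2_ne_add_left x.1 y.1 y.2
    have hyz := w2_ne_add_right x.1 y.1 x.2
    set z : W2Pt := ⟨x.1 + y.1, w2_add_ne_zero _ _ hxy⟩ with hzdef
    have hx' := hmem x (Or.inl rfl)
    have hy' := hmem y (Or.inr (Or.inl rfl))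
    have hz' := hmem z (Or.inr (Or.inr rfl))
    have dxy : x ≠ y := fun h => hxy (congrArg Subtype.val h)
    have dxz : x ≠ z := fun h => hxz (congrArg Subtype.val h)
    have dyz : y ≠ z := fun h => hyz (congrArg Subtype.val h)
    have hBxz : W2B x.1 z.1 = 0 :=
      w2_col_mem x.1 y.1 _ _ hB (Or.inl rfl) (Or.inr (Or.inr rfl))
    have hByz : W2B y.1 z.1 = 0 :=
      w2_col_mem x.1 y.1 _ _ hB (Or.inr (Or.inl rfl)) (Or.inr (Or.inr rfl))
    rcases hx' with h1 | h1 <;> rcases hy' with h2 | h2 <;> rcases hz' with h3 | h3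
    all_goals first
      | exact h₁.1 x h1 y h2 dxy hB
      | exact h₂.1 x h1 y h2 dxy hB
      | exact h₁.1 x h1 z h3 dxz hBxz
      | exact h₂.1 x h1 z h3 dxz hBxz
      | exact h₁.1 y h2 z h3 dyz hByz
      | exact h₂.1 y h2 z h3 dyz hByz

theorem stmt6 :
    (¬ ∃ O₁ O₂ O₃ : Set W2Pt, W2IsOvoid O₁ ∧ W2IsOvoid O₂ ∧ W2IsOvoid O₃ ∧
        Disjoint O₁ O₂ ∧ Disjoint O₁ O₃ ∧ Disjoint O₂ O₃ ∧
        O₁ ∪ O₂ ∪ O₃ = Set.univ) ∧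
    (¬ ∃ O₁ O₂ O₃ : Set W2Pt, W2IsOvoid O₁ ∧ W2IsOvoid O₂ ∧ W2IsOvoid O₃ ∧
        Disjoint O₁ O₂ ∧ Disjoint O₁ O₃ ∧ Disjoint O₂ O₃) := by
  refine ⟨w2_no_partition, ?_⟩
  rintro ⟨O₁, O₂, O₃, h₁, h₂, h₃, d₁₂, -, -⟩
  apply w2_no_partition
  refine ⟨O₁, O₂, (O₁ ∪ O₂)ᶜ, h₁, h₂, w2_compl_ovoid h₁ h₂ d₁₂, d₁₂, ?_, ?_, ?_⟩
  · exact Set.disjoint_left.mpr fun a ha hc => hc (Or.inl ha)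
  · exact Set.disjoint_left.mpr fun a ha hc => hc (Or.inr ha)
  · exact Set.union_compl_self _
end

section
/- Let S be a near polygon and let H be a full subgeometry of S that is isometrically embedded in S (distances between points of H are the same computed in H and in S), such that H itself is a near polygon. For a point x of S, let m = min over points y of H of d_S(x,y), and define f_x(y) = d_S(x,y) - m for every point y of H. Then f_x is a valuation of H, i.e., f_x attains the value 0 and every line of H contains a unique point on which f_x attains its minimum over that line, with all other points of the line having value one more. -/
/-- The collinearity graph of the subgeometry on a set of points with a given line set. -/
def subGraph {P : Type*} (HP : Set P) (Hlines : Set (Set P)) : SimpleGraph ↥HP where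
  Adj a b := (a : P) ≠ (b : P) ∧ ∃ L ∈ Hlines, (a : P) ∈ L ∧ (b : P) ∈ L
  symm := ⟨by rintro a b ⟨h, L, hL, ha, hb⟩; exact ⟨h.symm, L, hL, hb, ha⟩⟩
  loopless := ⟨by rintro a ⟨h, -⟩; exact h rfl⟩

theorem stmt11 {P : Type*} (S : Geometry P) (hS : S.IsNearPolygon)
    (HP : Set P) (Hlines : Set (Set P))
    (hsub : Hlines ⊆ S.lines) (hfull : ∀ L ∈ Hlines, L ⊆ HP)
    (hconn : (subGraph HP Hlines).Connected)
    (hHnp : ∀ (a : ↥HP), ∀ L ∈ Hlines, ∃! p : ↥HP, (p : P) ∈ L ∧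
      ∀ q : ↥HP, (q : P) ∈ L →
        (subGraph HP Hlines).dist a p ≤ (subGraph HP Hlines).dist a q)
    (hiso : ∀ a b : ↥HP, (subGraph HP Hlines).dist a b = S.coll.dist (a : P) (b : P))
    (x : P) (m : ℕ)
    (hm_le : ∀ y ∈ HP, m ≤ S.coll.dist x y)
    (hm_att : ∃ y ∈ HP, S.coll.dist x y = m) :
    (∃ y ∈ HP, S.coll.dist x y - m = 0) ∧
      ∀ L ∈ Hlines, ∃! p, p ∈ L ∧
        ∀ q ∈ L, q ≠ p → S.coll.dist x q - m = (S.coll.dist x p - m) + 1 := by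
  obtain ⟨hPLS, hconnS, hnp⟩ := hS
  constructor
  · obtain ⟨y, hy, hd⟩ := hm_att
    exact ⟨y, hy, by omega⟩
  · intro L hL
    obtain ⟨p, ⟨hpL, hpmin⟩, hpuniq⟩ := hnp x L (hsub hL)
    have hmp : m ≤ S.coll.dist x p := hm_le p (hfull L hL hpL)
    have key : ∀ q ∈ L, q ≠ p → S.coll.dist x q = S.coll.dist x p + 1 := by
      intro q hq hqp
      have hadj : S.coll.Adj p q := ⟨fun h => hqp h.symm, L, hsub hL, hpL, hq⟩
      have hd1 : S.coll.dist p q = 1 := SimpleGraph.dist_eq_one_iff_adj.mpr hadj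
      have h1 : S.coll.dist x q ≤ S.coll.dist x p + 1 := by
        have := hconnS.dist_triangle (u := x) (v := p) (w := q)
        omega
      have h2 : S.coll.dist x p ≤ S.coll.dist x q := hpmin q hq
      rcases eq_or_lt_of_le h2 with heq | hlt
      · exact absurd (hpuniq q ⟨hq, fun r hr => heq ▸ hpmin r hr⟩) hqp
      · omega
    refine ⟨p, ⟨hpL, fun q hq hqp => by rw [key q hq hqp]; omega⟩, ?_⟩
    rintro p' ⟨hp'L, hp'⟩
    by_contra hne
    have h1 := hp' p hpL (fun h => hne h.symm)
    have h2 := key p' hp'L hne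
    have hmp' : m ≤ S.coll.dist x p' := hm_le p' (hfull L hL hp'L)
    omega
end
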